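/- arXiv:1307.1987 — 2 statements merged into one kernel-verified Lean document; each statement's English description precedes it below -/
import Mathlib

section
/- Let D be an abelian category with a distinguished Giraud subcategory (D, C, l, i), endowed with a torsion pair (X, Y). Define l(X) := { T ∈ C | T ≅ l(X) for some X ∈ X } and l(Y) := { F ∈ C | F ≅ l(Y) for some Y ∈ Y }. Then (l(X), l(Y)) is a torsion pair on C if and only if il(Y) ⊆ Y; and in this case i^←(Y) = l(Y), where i^←(Y) := { C ∈ C | i(C) ∈ Y }. -/
open CategoryTheory Limits CategoryTheory.Pretriangulated

universe w'' w' w v'' u'' v' u' v u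

namespace TiltedGiraudPaper

section Basics

variable (C : Type u) [Category.{v} C]

/-- A class of objects is closed under extensions: for every short exact sequence,
if the two outer terms belong to the class, then so does the middle term. -/
def ClosedUnderExtensions [HasZeroMorphisms C] (P : Set C) : Prop :=
  ∀ S : ShortComplex C, S.ShortExact → S.X₁ ∈ P → S.X₃ ∈ P → S.X₂ ∈ P

/-- A class of objects is closed under (existing small) inductive limits. -/
def ClosedUnderColimits (P : Set C) : Prop :=
  ∀ {J : Type v} [SmallCategory J] {F : J ⥤ C} (c : Cocone F),
    IsColimit c → (∀ j, F.obj j ∈ P) → c.pt ∈ P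

/-- A class of objects is closed under (existing small) projective limits. -/
def ClosedUnderLimits (P : Set C) : Prop :=
  ∀ {J : Type v} [SmallCategory J] {F : J ⥤ C} (c : Cone F),
    IsLimit c → (∀ j, F.obj j ∈ P) → c.pt ∈ P

/-- A torsion class: a class of objects closed under inductive limits and extensions. -/
def IsTorsionClass [HasZeroMorphisms C] (P : Set C) : Prop :=
  ClosedUnderColimits C P ∧ ClosedUnderExtensions C P

/-- A torsion-free class: a class of objects closed under projective limits and extensions. -/
def IsTorsionFreeClass [HasZeroMorphisms C] (P : Set C) : Prop :=
  ClosedUnderLimits C P ∧ ClosedUnderExtensions C P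

/-- A Serre class: for every short exact sequence, the middle term belongs to the class
if and only if both outer terms do. -/
def IsSerreClass [HasZeroMorphisms C] (P : Set C) : Prop :=
  ∀ S : ShortComplex C, S.ShortExact → (S.X₂ ∈ P ↔ (S.X₁ ∈ P ∧ S.X₃ ∈ P))

/-- A torsion pair `(torsion, torsionFree)` on an abelian category: a torsion class and a
torsion-free class with no nonzero morphisms from the first to the second, such that every
object is an extension of a torsion-free object by a torsion object. -/
structure TorsionPair [HasZeroMorphisms C] where
  torsion : Set C
  torsionFree : Set C
  isTorsionClass : IsTorsionClass C torsion
  isTorsionFreeClass : IsTorsionFreeClass C torsionFree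
  hom_eq_zero : ∀ ⦃T F : C⦄, T ∈ torsion → F ∈ torsionFree → ∀ f : T ⟶ F, f = 0
  exists_ses : ∀ A : C, ∃ (T F : C) (f : T ⟶ A) (g : A ⟶ F) (w : f ≫ g = 0),
    T ∈ torsion ∧ F ∈ torsionFree ∧ (ShortComplex.mk f g w).ShortExact

end Basics

section Functors

variable {C : Type u} [Category.{v} C] {D : Type u'} [Category.{v'} D]

/-- The essential image of a class of objects under a functor. -/
def imageSet (L : C ⥤ D) (P : Set C) : Set D :=
  {Y | ∃ X, X ∈ P ∧ Nonempty (L.obj X ≅ Y)}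

/-- The preimage of a class of objects under a functor. -/
def preimageSet (L : C ⥤ D) (P : Set D) : Set C :=
  {X | L.obj X ∈ P}

/-- The kernel of a functor: the class of objects sent to a zero object. -/
def kerSet (L : C ⥤ D) : Set C :=
  {X | IsZero (L.obj X)}

end Functors

section Perp

variable {C : Type u} [Category.{v} C]

/-- `S^⊥`: the class of objects receiving no nonzero morphism from objects of `S`. -/
def rightPerp [HasZeroMorphisms C] (S : Set C) : Set C :=
  {Y | ∀ X ∈ S, ∀ f : X ⟶ Y, f = 0}

/-- `^⊥S`: the class of objects admitting no nonzero morphism to objects of `S`. -/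
def leftPerp [HasZeroMorphisms C] (S : Set C) : Set C :=
  {X | ∀ Y ∈ S, ∀ f : X ⟶ Y, f = 0}

/-- The class of morphisms whose kernel and cokernel belong to the class `S`. -/
def serreW [HasZeroMorphisms C] (S : Set C) : MorphismProperty C := fun X Y f =>
  (∃ (K : C) (k : K ⟶ X) (w : k ≫ f = 0), K ∈ S ∧ Nonempty (IsLimit (KernelFork.ofι k w))) ∧
  (∃ (Q : C) (q : Y ⟶ Q) (w : f ≫ q = 0), Q ∈ S ∧ Nonempty (IsColimit (CokernelCofork.ofπ q w)))

end Perp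

/-- `L : C ⥤ D` exhibits `D` as the (Gabriel) quotient of `C` by the Serre class `S`:
`L` is exact, essentially surjective, its kernel is exactly `S`, and `L` is a localization
of `C` at the class of morphisms with kernel and cokernel in `S`. -/
def IsSerreQuotient {C : Type u} [Category.{v} C] [HasZeroMorphisms C]
    {D : Type u'} [Category.{v'} D] (S : Set C) (L : C ⥤ D) : Prop :=
  Nonempty (PreservesFiniteLimits L) ∧ Nonempty (PreservesFiniteColimits L) ∧
  L.EssSurj ∧ (∀ X : C, IsZero (L.obj X) ↔ X ∈ S) ∧
  L.IsLocalization (serreW S)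


section Aux

variable {E : Type u} [Category.{v} E]

/-- A class closed under projective limits is closed under isomorphisms. -/
lemma mem_of_iso_of_closedUnderLimits {P : Set E} (hP : ClosedUnderLimits E P)
    {A B : E} (e : A ≅ B) (hB : B ∈ P) : A ∈ P := by
  let F : Discrete PUnit.{v + 1} ⥤ E := (Functor.const _).obj B
  let c : Cone F :=
    { pt := A
      π := { app := fun _ => e.hom, naturality := by rintro ⟨⟨⟩⟩ ⟨⟨⟩⟩ f; simp [F] } }
  have hc : IsLimit c :=
    { lift := fun s => s.π.app ⟨PUnit.unit⟩ ≫ e.inv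
      fac := fun s j => by
        obtain ⟨⟨⟩⟩ := j
        simp [c]
      uniq := fun s m hm => by
        have h := hm ⟨PUnit.unit⟩
        dsimp [c] at h ⊢
        rw [← h, Category.assoc, e.hom_inv_id, Category.comp_id] }
  exact hP c hc fun _ => hB

lemma closedUnderColimits_leftPerp [HasZeroMorphisms E] (S : Set E) :
    ClosedUnderColimits E (leftPerp S) := by
  intro J _ F c hc hmem Y hY f
  exact hc.hom_ext fun j => by
    rw [comp_zero]
    exact hmem j Y hY _

lemma closedUnderLimits_rightPerp [HasZeroMorphisms E] (S : Set E) :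
    ClosedUnderLimits E (rightPerp S) := by
  intro J _ F c hc hmem Y hY f
  exact hc.hom_ext fun j => by
    rw [zero_comp]
    exact hmem j Y hY _

lemma closedUnderExtensions_leftPerp [Abelian E] (S : Set E) :
    ClosedUnderExtensions E (leftPerp S) := by
  intro T hT h1 h3 Y hY f
  have w : T.f ≫ f = 0 := h1 Y hY _
  obtain ⟨φ, hφ⟩ := CokernelCofork.IsColimit.desc' hT.gIsCokernel f w
  rw [← hφ, h3 Y hY φ, comp_zero]

lemma closedUnderExtensions_rightPerp [Abelian E] (S : Set E) :
    ClosedUnderExtensions E (rightPerp S) := by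
  intro T hT h1 h3 Y hY f
  have w : f ≫ T.g = 0 := h3 Y hY _
  obtain ⟨φ, hφ⟩ := KernelFork.IsLimit.lift' hT.fIsKernel f w
  rw [← hφ, h1 Y hY φ, zero_comp]

end Aux

/-- **Proposition.** Let `(D, C, l, i)` be a distinguished Giraud subcategory and `(X, Y)`
a torsion pair on `D`.  Then `(l(X), l(Y))` (essential images) is a torsion pair on `C` if
and only if `il(Y) ⊆ Y`; and in this case `i^←(Y) = l(Y)`. -/
theorem image_torsionPair_iff
    {D : Type u} [Category.{v} D] [Abelian D]
    {C : Type u} [Category.{v} C] [Abelian C]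
    (l : D ⥤ C) (i : C ⥤ D) (adj : l ⊣ i)
    [PreservesFiniteLimits l] [PreservesFiniteColimits l] [i.Full] [i.Faithful]
    (p : TorsionPair D) :
    ((∃ q : TorsionPair C,
        q.torsion = imageSet l p.torsion ∧ q.torsionFree = imageSet l p.torsionFree) ↔
      (∀ Y ∈ p.torsionFree, i.obj (l.obj Y) ∈ p.torsionFree)) ∧
    ((∀ Y ∈ p.torsionFree, i.obj (l.obj Y) ∈ p.torsionFree) →
      preimageSet i p.torsionFree = imageSet l p.torsionFree) := by
  haveI := adj.isLeftAdjoint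
  haveI : l.Additive := by
    haveI := preservesBinaryBiproducts_of_preservesBinaryProducts l
    exact Functor.additive_of_preservesBinaryBiproducts l
  have hmap : ∀ S : ShortComplex D, S.ShortExact → (S.map l).ShortExact := by
    have h0 := (Functor.exact_tfae l).out 3 0
    exact h0.1 ⟨inferInstance, inferInstance⟩
  -- decomposition of any object of `C` as an extension coming from `D`
  have decompC : ∀ A : C, ∃ (X₀ F₀ : D) (f : l.obj X₀ ⟶ A) (g : A ⟶ l.obj F₀)
      (w : f ≫ g = 0), X₀ ∈ p.torsion ∧ F₀ ∈ p.torsionFree ∧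
      (ShortComplex.mk f g w).ShortExact := by
    intro A
    obtain ⟨T, F, f, g, w, hT, hF, hse⟩ := p.exists_ses (i.obj A)
    refine ⟨T, F, l.map f ≫ adj.counit.app A, inv (adj.counit.app A) ≫ l.map g, ?_, hT, hF, ?_⟩
    · rw [Category.assoc, IsIso.hom_inv_id_assoc, ← l.map_comp, w, l.map_zero]
    · refine ShortComplex.shortExact_of_iso
        (ShortComplex.isoMk (S₁ := (ShortComplex.mk f g w).map l)
          (Iso.refl _) (asIso (adj.counit.app A) : l.obj (i.obj A) ≅ A) (Iso.refl _) ?_ ?_) (hmap _ hse)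
      · exact Category.id_comp _
      · exact (IsIso.hom_inv_id_assoc (adj.counit.app A) (l.map g)).trans (Category.comp_id _).symm
  constructor
  · constructor
    · -- torsion pair on `C` implies `il(Y) ⊆ Y`
      rintro ⟨q, hqT, hqF⟩ Y₀ hY₀
      obtain ⟨T, F, f, g, w, hT, hF, hse⟩ := p.exists_ses (i.obj (l.obj Y₀))
      have hlf : l.map f = 0 := by
        have h1 : l.obj T ∈ q.torsion := by
          rw [hqT]; exact ⟨T, hT, ⟨Iso.refl _⟩⟩
        have h2 : l.obj (i.obj (l.obj Y₀)) ∈ q.torsionFree := by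
          rw [hqF]
          exact ⟨Y₀, hY₀, ⟨(asIso (adj.counit.app (l.obj Y₀))).symm⟩⟩
        exact q.hom_eq_zero h1 h2 _
      haveI : Mono (l.map f) := (hmap _ hse).mono_f
      have hzT : IsZero (l.obj T) := IsZero.of_mono_eq_zero _ hlf
      have hf0 : f = 0 := by
        have h := (Equiv.apply_symm_apply (adj.homEquiv T (l.obj Y₀)) f).symm
        rw [hzT.eq_of_src ((adj.homEquiv T (l.obj Y₀)).symm f) 0] at h
        rw [h, Adjunction.homEquiv_unit, Functor.map_zero, comp_zero]
      haveI : Mono (ShortComplex.mk f g w).g := hse.exact.mono_g hf0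
      haveI := hse.epi_g
      haveI : IsIso g := isIso_of_mono_of_epi (C := D) g
      exact mem_of_iso_of_closedUnderLimits p.isTorsionFreeClass.1 (asIso g) hF
    · -- `il(Y) ⊆ Y` implies the torsion pair on `C` exists
      intro h
      have homzero : ∀ ⦃T' F' : C⦄, T' ∈ imageSet l p.torsion →
          F' ∈ imageSet l p.torsionFree → ∀ f : T' ⟶ F', f = 0 := by
        rintro T' F' ⟨X₀, hX₀, ⟨eT⟩⟩ ⟨Y₀, hY₀, ⟨eF⟩⟩ f
        have key : eT.hom ≫ f ≫ eF.inv = 0 := by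
          have hg : (adj.homEquiv X₀ (l.obj Y₀)) (eT.hom ≫ f ≫ eF.inv) = 0 :=
            p.hom_eq_zero hX₀ (h _ hY₀) _
          have h2 := congrArg (adj.homEquiv X₀ (l.obj Y₀)).symm hg
          rw [Equiv.symm_apply_apply] at h2
          rw [h2, Adjunction.homEquiv_counit, Functor.map_zero, zero_comp]
        have hf : f = eT.inv ≫ (eT.hom ≫ f ≫ eF.inv) ≫ eF.hom := by simp
        rw [hf, key, zero_comp, comp_zero]
      have hXeq : imageSet l p.torsion = leftPerp (imageSet l p.torsionFree) := by
        ext T'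
        constructor
        · intro hT' F' hF' f
          exact homzero hT' hF' f
        · intro hT'
          obtain ⟨X₀, F₀, f, g, w, hX₀, hF₀, hse⟩ := decompC T'
          have hg0 : g = 0 := hT' _ ⟨F₀, hF₀, ⟨Iso.refl _⟩⟩ g
          haveI : Epi (ShortComplex.mk f g w).f := hse.exact.epi_f hg0
          haveI := hse.mono_f
          haveI : IsIso f := isIso_of_mono_of_epi (C := C) f
          exact ⟨X₀, hX₀, ⟨asIso f⟩⟩
      have hYeq : imageSet l p.torsionFree = rightPerp (imageSet l p.torsion) := by
        ext F'
        constructor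
        · intro hF' T' hT' f
          exact homzero hT' hF' f
        · intro hF'
          obtain ⟨X₀, F₀, f, g, w, hX₀, hF₀, hse⟩ := decompC F'
          have hf0 : f = 0 := hF' _ ⟨X₀, hX₀, ⟨Iso.refl _⟩⟩ f
          haveI : Mono (ShortComplex.mk f g w).g := hse.exact.mono_g hf0
          haveI := hse.epi_g
          haveI : IsIso g := isIso_of_mono_of_epi (C := C) g
          exact ⟨F₀, hF₀, ⟨(asIso g).symm⟩⟩
      refine ⟨⟨imageSet l p.torsion, imageSet l p.torsionFree, ?_, ?_, homzero, ?_⟩, rfl, rfl⟩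
      · rw [hXeq]
        exact ⟨closedUnderColimits_leftPerp _, closedUnderExtensions_leftPerp _⟩
      · rw [hYeq]
        exact ⟨closedUnderLimits_rightPerp _, closedUnderExtensions_rightPerp _⟩
      · intro A
        obtain ⟨X₀, F₀, f, g, w, hX₀, hF₀, hse⟩ := decompC A
        exact ⟨l.obj X₀, l.obj F₀, f, g, w, ⟨X₀, hX₀, ⟨Iso.refl _⟩⟩,
          ⟨F₀, hF₀, ⟨Iso.refl _⟩⟩, hse⟩
  · -- in this case `i^←(Y) = l(Y)`
    intro h
    ext A
    constructor
    · intro hA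
      exact ⟨i.obj A, hA, ⟨asIso (adj.counit.app A)⟩⟩
    · rintro ⟨Y₀, hY₀, ⟨e⟩⟩
      exact mem_of_iso_of_closedUnderLimits p.isTorsionFreeClass.1
        (i.mapIso e.symm) (h _ hY₀)


end TiltedGiraudPaper
end

section
/- Let D be an abelian category with a distinguished co-Giraud subcategory (D, C, j, r), endowed with a torsion pair (X, Y). Define r(X) := { T ∈ C | T ≅ r(X) for some X ∈ X } and r(Y) := { F ∈ C | F ≅ r(Y) for some Y ∈ Y }. Then (r(X), r(Y)) is a torsion pair on C if and only if jr(X) ⊆ X; and in this case j^←(X) = r(X), where j^←(X) := { C ∈ C | j(C) ∈ X }. -/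
open CategoryTheory Limits CategoryTheory.Pretriangulated

universe w'' w' w v'' u'' v' u' v u

namespace TiltedGiraudPaper

section Helpers

variable {A : Type u''} [Category.{v''} A]

lemma mem_of_iso_of_closedUnderColimits {P : Set A}
    (h : ClosedUnderColimits A P) {X Y : A} (e : X ≅ Y) (hX : X ∈ P) : Y ∈ P := by
  let F : Discrete PUnit.{v'' + 1} ⥤ A := (Functor.const _).obj X
  refine h (F := F) (Cocone.mk Y
    { app := fun _ => e.hom
      naturality := by rintro ⟨⟨⟩⟩ ⟨⟨⟩⟩ f; simp [F] }) ?_ (fun _ => hX)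
  exact
    { desc := fun s => e.inv ≫ s.ι.app ⟨PUnit.unit⟩
      fac := by rintro s ⟨⟨⟩⟩; simp
      uniq := by
        rintro s m hm
        have := hm ⟨PUnit.unit⟩
        dsimp at this ⊢
        rw [← this]; simp }

lemma isTorsionClass_leftPerp [Abelian A] (P : Set A) :
    IsTorsionClass A (leftPerp P) := by
  constructor
  · intro J _ F c hc hmem Z hZ f
    exact hc.hom_ext fun i => by rw [hmem i Z hZ (c.ι.app i ≫ f), comp_zero]
  · intro S hS h1 h3 Z hZ f
    haveI := hS.epi_g
    have hf1 : S.f ≫ f = 0 := h1 Z hZ _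
    obtain ⟨l, hl⟩ := CokernelCofork.IsColimit.desc' hS.exact.gIsCokernel f hf1
    dsimp at hl
    rw [← hl, h3 Z hZ l, comp_zero]

lemma isTorsionFreeClass_rightPerp [Abelian A] (P : Set A) :
    IsTorsionFreeClass A (rightPerp P) := by
  constructor
  · intro J _ F c hc hmem Z hZ f
    exact hc.hom_ext fun i => by rw [hmem i Z hZ (f ≫ c.π.app i), zero_comp]
  · intro S hS h1 h3 Z hZ f
    haveI := hS.mono_f
    have hf3 : f ≫ S.g = 0 := h3 Z hZ _
    obtain ⟨l, hl⟩ := KernelFork.IsLimit.lift' hS.exact.fIsKernel f hf3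
    dsimp at hl
    rw [← hl, h1 Z hZ l, zero_comp]

end Helpers

/-- **Proposition.** Let `(D, C, j, r)` be a distinguished co-Giraud subcategory and
`(X, Y)` a torsion pair on `D`.  Then `(r(X), r(Y))` (essential images) is a torsion pair
on `C` if and only if `jr(X) ⊆ X`; and in this case `j^←(X) = r(X)`. -/
theorem image_torsionPair_iff_coGiraud
    {D : Type u} [Category.{v} D] [Abelian D]
    {C : Type u} [Category.{v} C] [Abelian C]
    (j : C ⥤ D) (r : D ⥤ C) (adj : j ⊣ r)
    [PreservesFiniteLimits r] [PreservesFiniteColimits r] [j.Full] [j.Faithful]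
    (p : TorsionPair D) :
    ((∃ q : TorsionPair C,
        q.torsion = imageSet r p.torsion ∧ q.torsionFree = imageSet r p.torsionFree) ↔
      (∀ X ∈ p.torsion, j.obj (r.obj X) ∈ p.torsion)) ∧
    ((∀ X ∈ p.torsion, j.obj (r.obj X) ∈ p.torsion) →
      preimageSet j p.torsion = imageSet r p.torsion) := by
  haveI : PreservesColimitsOfSize.{0, 0} j := adj.leftAdjoint_preservesColimits
  haveI : r.PreservesZeroMorphisms :=
    Functor.preservesZeroMorphisms_of_map_zero_object
      (((isZero_zero D).isTerminal.isTerminalObj r _).uniqueUpToIso (isZero_zero C).isTerminal)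
  haveI : j.PreservesZeroMorphisms :=
    Functor.preservesZeroMorphisms_of_map_zero_object
      (((isZero_zero C).isInitial.isInitialObj j _).uniqueUpToIso (isZero_zero D).isInitial)
  -- every object of `C` sits in a short exact sequence with outer terms in the image of `r`
  have ses : ∀ A : C, ∃ (T F : D) (f : r.obj T ⟶ A) (g : A ⟶ r.obj F) (w : f ≫ g = 0),
      T ∈ p.torsion ∧ F ∈ p.torsionFree ∧ (ShortComplex.mk f g w).ShortExact := by
    intro A
    obtain ⟨T, F, t, s, w, hT, hF, hse⟩ := p.exists_ses (j.obj A)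
    have hmap := hse.map_of_exact r
    let u : A ≅ r.obj (j.obj A) := asIso (adj.unit.app A)
    have w2 : (r.map t ≫ u.inv) ≫ (u.hom ≫ r.map s) = 0 := by
      rw [Category.assoc, Iso.inv_hom_id_assoc, ← r.map_comp, w, Functor.map_zero]
    refine ⟨T, F, _, _, w2, hT, hF, ?_⟩
    refine ShortComplex.shortExact_of_iso
      (S₁ := (ShortComplex.mk t s w).map r) ?_ hmap
    exact ShortComplex.isoMk (Iso.refl _) u.symm (Iso.refl _) (by exact Category.id_comp _)
      (by exact (Iso.inv_hom_id_assoc u _).trans (Category.comp_id _).symm)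
  constructor
  · constructor
    · -- existence of the torsion pair on `C` implies `jr(X) ⊆ X`
      rintro ⟨q, hqT, hqF⟩ X hX
      obtain ⟨T, F, t, s, w, hT, hF, hse⟩ := p.exists_ses (j.obj (r.obj X))
      have hsz : s = 0 := by
        have h1 : (adj.homEquiv (r.obj X) F) s = 0 := by
          apply q.hom_eq_zero
          · rw [hqT]; exact ⟨X, hX, ⟨Iso.refl _⟩⟩
          · rw [hqF]; exact ⟨F, hF, ⟨Iso.refl _⟩⟩
        have h2 := congrArg (adj.homEquiv (r.obj X) F).symm h1
        rwa [Equiv.symm_apply_apply, Adjunction.homEquiv_counit, Functor.map_zero,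
          zero_comp] at h2
      haveI : Epi t := hse.exact.epi_f hsz
      haveI := hse.mono_f
      haveI : IsIso t := isIso_of_mono_of_epi t
      exact mem_of_iso_of_closedUnderColimits p.isTorsionClass.1 (asIso t) hT
    · -- `jr(X) ⊆ X` implies the image classes form a torsion pair
      intro H
      have hv : ∀ {T F : C}, T ∈ imageSet r p.torsion → F ∈ imageSet r p.torsionFree →
          ∀ f : T ⟶ F, f = 0 := by
        rintro T F ⟨X, hX, ⟨e1⟩⟩ ⟨Y, hY, ⟨e2⟩⟩ f
        have hg : (adj.homEquiv (r.obj X) Y).symm (e1.hom ≫ f ≫ e2.inv) = 0 :=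
          p.hom_eq_zero (H X hX) hY _
        have h2 := congrArg (adj.homEquiv (r.obj X) Y) hg
        rw [Equiv.apply_symm_apply, Adjunction.homEquiv_unit, Functor.map_zero,
          comp_zero] at h2
        calc f = e1.inv ≫ (e1.hom ≫ f ≫ e2.inv) ≫ e2.hom := by simp
        _ = 0 := by rw [h2]; simp
      have hT'eq : imageSet r p.torsion = leftPerp (imageSet r p.torsionFree) := by
        ext A
        constructor
        · intro hA Z hZ f
          exact hv hA hZ f
        · intro hA
          obtain ⟨T, F, f, g, w, hT, hF, hse⟩ := ses A
          have hg : g = 0 := hA _ ⟨F, hF, ⟨Iso.refl _⟩⟩ g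
          haveI : Epi f := hse.exact.epi_f hg
          haveI := hse.mono_f
          haveI : IsIso f := isIso_of_mono_of_epi f
          exact ⟨T, hT, ⟨asIso f⟩⟩
      have hF'eq : imageSet r p.torsionFree = rightPerp (imageSet r p.torsion) := by
        ext A
        constructor
        · intro hA Z hZ f
          exact hv hZ hA f
        · intro hA
          obtain ⟨T, F, f, g, w, hT, hF, hse⟩ := ses A
          have hf : f = 0 := hA _ ⟨T, hT, ⟨Iso.refl _⟩⟩ f
          haveI : Mono g := hse.exact.mono_g hf
          haveI := hse.epi_g
          haveI : IsIso g := isIso_of_mono_of_epi g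
          exact ⟨F, hF, ⟨(asIso g).symm⟩⟩
      refine ⟨⟨imageSet r p.torsion, imageSet r p.torsionFree, ?_, ?_, ?_, ?_⟩, rfl, rfl⟩
      · rw [hT'eq]; exact isTorsionClass_leftPerp _
      · rw [hF'eq]; exact isTorsionFreeClass_rightPerp _
      · intro T F hT hF f
        exact hv hT hF f
      · intro A
        obtain ⟨T, F, f, g, w, hT, hF, hse⟩ := ses A
        exact ⟨_, _, f, g, w, ⟨T, hT, ⟨Iso.refl _⟩⟩, ⟨F, hF, ⟨Iso.refl _⟩⟩, hse⟩
  · -- in this case `j⁻¹(X) = r(X)`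
    intro H
    ext A
    constructor
    · intro hA
      exact ⟨j.obj A, hA, ⟨(asIso (adj.unit.app A)).symm⟩⟩
    · rintro ⟨X, hX, ⟨e⟩⟩
      have : j.obj (r.obj X) ∈ p.torsion := H X hX
      exact mem_of_iso_of_closedUnderColimits p.isTorsionClass.1 (j.mapIso e) this


end TiltedGiraudPaper
end
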